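/- Let R be a π-torsion free, π-adically complete ring with q ≥ 3. Suppose φ_{N^1}(z) = ∑_{i=0}^{sf} π^{q^i - 1} P_i^φ τ^i with P_0 = πI. Then there is a unique twisted power series ν_1 = ∑_{i≥0} B_i τ^i with B_0 = I satisfying ν_1 ∘ φ_{N^1}(z) = πI ∘ ν_1, its coefficients satisfy v(B_i) ≥ i for all i, and hence ν_1 lies in the group S* and is an isomorphism N^1 ≅ Ĝ_a^d of A-module schemes. -/

import Mathlib

open Finset

section NuOneAux

variable {R : Type*} [CommRing R]

/-- Divide by `π` if possible (choice). -/
noncomputable def nuPdiv (π x : R) : R :=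
  @dite _ (π ∣ x) (Classical.dec _) (fun h => h.choose) (fun _ => 0)

lemma nuPdiv_spec {π x : R} (h : π ∣ x) : π * nuPdiv π x = x := by
  rw [nuPdiv, dif_pos h]; exact h.choose_spec.symm

/-- The recursively-defined coefficients of `ν₁`. -/
noncomputable def nuBseq (π : R) (q d : ℕ) (C : ℕ → Matrix (Fin d) (Fin d) R) :
    ℕ → Matrix (Fin d) (Fin d) R
  | 0 => 1
  | (k+1) =>
    Matrix.of fun a b =>
      (Ring.inverse (1 - π ^ (q ^ (k+1) - 1))) *
        nuPdiv π ((∑ j ∈ range (k+1),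
          nuBseq π q d C (k - j) * (C (j+1)).map (fun x => x ^ q ^ (k - j))) a b)
  termination_by k => k
  decreasing_by omega

lemma nuBseq_zero (π : R) (q d : ℕ) (C : ℕ → Matrix (Fin d) (Fin d) R) :
    nuBseq π q d C 0 = 1 := by rw [nuBseq]

lemma nuBseq_succ (π : R) (q d : ℕ) (C : ℕ → Matrix (Fin d) (Fin d) R) (k : ℕ) :
    nuBseq π q d C (k+1) =
      Matrix.of fun a b =>
        (Ring.inverse (1 - π ^ (q ^ (k+1) - 1))) *
          nuPdiv π ((∑ j ∈ range (k+1),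
            nuBseq π q d C (k - j) * (C (j+1)).map (fun x => x ^ q ^ (k - j))) a b) := by
  rw [nuBseq]

lemma nu_three_pow_ge (j : ℕ) (hj : 1 ≤ j) : j + 2 ≤ 3 ^ j := by
  induction j with
  | zero => omega
  | succ n ih =>
    rcases Nat.eq_or_lt_of_le hj with h | h
    · simp [← h]
    · have h1 := ih (by omega)
      have h2 : 3 ^ (n+1) = 3 * 3 ^ n := by ring
      omega

lemma nu_exp_bound (q m j : ℕ) (hq : 3 ≤ q) (hj : j ≤ m) :
    m + 2 ≤ (m - j) + (q ^ (j+1) - 1) * q ^ (m - j) := by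
  have h1 : (j+1) + 2 ≤ q ^ (j+1) :=
    le_trans (nu_three_pow_ge (j+1) (by omega)) (Nat.pow_le_pow_left hq _)
  have h2 : 1 ≤ q ^ (m - j) := Nat.one_le_pow _ _ (by omega)
  have h3 : j + 2 ≤ (q ^ (j+1) - 1) * q ^ (m - j) := by
    calc j + 2 ≤ (q ^ (j+1) - 1) * 1 := by omega
    _ ≤ (q ^ (j+1) - 1) * q ^ (m - j) := Nat.mul_le_mul_left _ h2
  omega

end NuOneAux

/-- Let `R` be a `π`-torsion free, `π`-adically complete
discrete valuation ring with `q ≥ 3`, and suppose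
`φ_{N¹}(z) = ∑_{i=0}^{sf} π^{q^i - 1} P_i^φ τ^i` with `P₀ = π·I` (so the
`0`-th coefficient is `π·I` and the `i`-th coefficient has all entries
divisible by `π^{q^i - 1}`, vanishing for `i > sf`).  Then there is a
*unique* twisted power series `ν₁ = ∑ B_i τ^i` with `B₀ = I` satisfying
`ν₁ ∘ φ_{N¹}(z) = π·I ∘ ν₁`; moreover its coefficients satisfy
`v(B_i) ≥ i` for all `i` (and `B₀ = I` is invertible), hence `ν₁` lies in
the group `S*` and is an isomorphism `N¹ ≅ Ĝ_a^d` of `A`-module schemes. -/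
theorem nu_one_exists_unique
    {R : Type*} [CommRing R] [IsDomain R] [IsDiscreteValuationRing R]
    (p : ℕ) [Fact p.Prime] [CharP R p]
    (hexp : ℕ) (hh : 0 < hexp) (q : ℕ) (hq : q = p ^ hexp) (hq3 : 3 ≤ q)
    (π : R) (hπ : Irreducible π)
    (hcomplete : IsAdicComplete (Ideal.span {π}) R)
    (d sf : ℕ) (hd : 1 ≤ d)
    (C : ℕ → Matrix (Fin d) (Fin d) R)
    (hC0 : C 0 = π • (1 : Matrix (Fin d) (Fin d) R))
    (hCval : ∀ i, 1 ≤ i → ∀ a b, C i a b ∈ (Ideal.span {π} : Ideal R) ^ (q ^ i - 1))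
    (hCtop : ∀ i > sf, C i = 0) :
    (∃! B : ℕ → Matrix (Fin d) (Fin d) R,
        B 0 = 1 ∧
        ∀ k : ℕ,
          (∑ j ∈ range (k + 1), B (k - j) * (C j).map (fun x => x ^ q ^ (k - j)))
            = π • B k) ∧
    (∀ B : ℕ → Matrix (Fin d) (Fin d) R,
        (B 0 = 1 ∧
          ∀ k : ℕ,
            (∑ j ∈ range (k + 1), B (k - j) * (C j).map (fun x => x ^ q ^ (k - j)))
              = π • B k) →
        (∀ i, ∀ a b, B i a b ∈ (Ideal.span {π} : Ideal R) ^ i) ∧ IsUnit (B 0)) := by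
  have hπ0 : π ≠ 0 := hπ.ne_zero
  have hq0 : 0 < q := by omega
  have hqk1 : ∀ k : ℕ, 1 ≤ q ^ k := fun k => Nat.one_le_pow _ _ hq0
  -- `1 - π^e` is a unit for `e ≥ 1`
  have hunit : ∀ e : ℕ, 1 ≤ e → IsUnit (1 - π ^ e) := by
    intro e he
    apply IsLocalRing.isUnit_one_sub_self_of_mem_nonunits
    rw [mem_nonunits_iff]
    intro hu
    exact hπ.not_isUnit (isUnit_of_dvd_unit (dvd_pow_self π (by omega)) hu)
  have hfactgen : ∀ n : ℕ, 1 ≤ n → π - π ^ n = π * (1 - π ^ (n - 1)) := by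
    intro n hn
    obtain ⟨e, rfl⟩ : ∃ e, n = e + 1 := ⟨n - 1, by omega⟩
    rw [Nat.add_sub_cancel, pow_succ]
    ring
  -- entries of `C (j+1)` are divisible by `π`
  have hCdvd : ∀ (j : ℕ) (a b : Fin d), π ∣ C (j+1) a b := by
    intro j a b
    have h1 := hCval (j+1) (by omega) a b
    have h2 : (Ideal.span {π} : Ideal R) ^ (q ^ (j+1) - 1) ≤ Ideal.span {π} := by
      apply Ideal.pow_le_self
      have := hqk1 (j+1)
      have : 3 ≤ q ^ (j+1) :=
        le_trans (by omega) (Nat.pow_le_pow_left hq3 1 |>.trans (Nat.pow_le_pow_right (by omega) (by omega)))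
      omega
    exact Ideal.mem_span_singleton.mp (h2 h1)
  -- the 0-th coefficient raised to powers
  have hmapC0 : ∀ m : ℕ, 1 ≤ m →
      (C 0).map (fun x => x ^ m) = (π ^ m) • (1 : Matrix (Fin d) (Fin d) R) := by
    intro m hm
    ext a b
    by_cases h : a = b <;>
      simp [hC0, Matrix.map_apply, Matrix.one_apply, h, mul_pow,
        zero_pow (show m ≠ 0 by omega)]
  -- the key consequence of the recursion
  have key : ∀ B : ℕ → Matrix (Fin d) (Fin d) R,
      (∀ k : ℕ,
        (∑ j ∈ range (k + 1), B (k - j) * (C j).map (fun x => x ^ q ^ (k - j)))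
          = π • B k) →
      ∀ k : ℕ,
        (∑ j ∈ range k, B (k - (j+1)) * (C (j+1)).map (fun x => x ^ q ^ (k - (j+1))))
          = (π - π ^ q ^ k) • B k := by
    intro B hrec k
    have h := hrec k
    rw [Finset.sum_range_succ'] at h
    simp only [Nat.sub_zero] at h
    rw [hmapC0 (q ^ k) (hqk1 k), mul_smul_comm, Matrix.mul_one] at h
    rw [sub_smul]
    exact eq_sub_of_add_eq h
  set Bc := nuBseq π q d C with hBc
  have hBc0 : Bc 0 = 1 := nuBseq_zero π q d C
  -- the constructed sequence satisfies the recursion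
  have hBcrec : ∀ k : ℕ,
      (∑ j ∈ range (k + 1), Bc (k - j) * (C j).map (fun x => x ^ q ^ (k - j)))
        = π • Bc k := by
    intro k
    cases k with
    | zero =>
      rw [Finset.sum_range_one]
      simp only [Nat.sub_zero, pow_zero]
      rw [hmapC0 1 le_rfl, mul_smul_comm, Matrix.mul_one, pow_one]
    | succ k =>
      rw [Finset.sum_range_succ']
      simp only [Nat.sub_zero, Nat.succ_sub_succ_eq_sub]
      set M := ∑ j ∈ range (k+1), Bc (k - j) * (C (j+1)).map (fun x => x ^ q ^ (k - j))
        with hM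
      have hMd : ∀ a b, π ∣ M a b := by
        intro a b
        rw [hM]
        simp only [Matrix.sum_apply, Matrix.mul_apply, Matrix.map_apply]
        apply Finset.dvd_sum; intro j _
        apply Finset.dvd_sum; intro c _
        exact Dvd.dvd.mul_left
          (dvd_pow (hCdvd j c b) (by positivity)) _
      have he : 1 ≤ q ^ (k+1) - 1 := by
        have : 3 ≤ q ^ (k+1) := le_trans hq3 (Nat.le_self_pow (by omega) q)
        omega
      have hfact : π - π ^ q ^ (k+1) = π * (1 - π ^ (q ^ (k+1) - 1)) :=
        hfactgen _ (hqk1 _)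
      have hMeq : M = (π - π ^ q ^ (k+1)) • Bc (k+1) := by
        ext a b
        rw [hBc, nuBseq_succ π q d C k]
        simp only [Matrix.smul_apply, Matrix.of_apply, smul_eq_mul]
        rw [hfact]
        rw [show π * (1 - π ^ (q ^ (k+1) - 1)) *
            (Ring.inverse (1 - π ^ (q ^ (k+1) - 1)) * nuPdiv π (M a b))
          = π * ((1 - π ^ (q ^ (k+1) - 1)) * Ring.inverse (1 - π ^ (q ^ (k+1) - 1))
              * nuPdiv π (M a b)) by ring]
        rw [Ring.mul_inverse_cancel _ (hunit _ he), one_mul, nuPdiv_spec (hMd a b)]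
      rw [hmapC0 (q ^ (k+1)) (hqk1 (k+1)), mul_smul_comm, Matrix.mul_one, hMeq,
        ← add_smul]
      congr 1
      ring
  -- the valuation estimate, for any solution of the recursion
  have hval : ∀ B : ℕ → Matrix (Fin d) (Fin d) R,
      (B 0 = 1 ∧
        ∀ k : ℕ,
          (∑ j ∈ range (k + 1), B (k - j) * (C j).map (fun x => x ^ q ^ (k - j)))
            = π • B k) →
      ∀ i, ∀ a b, B i a b ∈ (Ideal.span {π} : Ideal R) ^ i := by
    intro B ⟨hB0, hrec⟩ i
    induction i using Nat.strong_induction_on with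
    | _ i ih =>
      cases i with
      | zero => intro a b; simp
      | succ m =>
        intro a b
        have hk := key B hrec (m+1)
        have hmem : (∑ j ∈ range (m+1),
            B (m+1 - (j+1)) * (C (j+1)).map (fun x => x ^ q ^ (m+1 - (j+1)))) a b
            ∈ (Ideal.span {π} : Ideal R) ^ (m+2) := by
          simp only [Matrix.sum_apply, Matrix.mul_apply, Matrix.map_apply,
            Nat.succ_sub_succ_eq_sub]
          apply Ideal.sum_mem; intro j hj
          apply Ideal.sum_mem; intro c _
          have hjm : j ≤ m := by
            have := Finset.mem_range.mp hj; omega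
          have h1 : B (m - j) a c ∈ (Ideal.span {π} : Ideal R) ^ (m - j) :=
            ih (m - j) (by omega) a c
          have h2 : (C (j+1) c b) ^ q ^ (m - j)
              ∈ (Ideal.span {π} : Ideal R) ^ ((q ^ (j+1) - 1) * q ^ (m - j)) := by
            have := Ideal.pow_mem_pow (hCval (j+1) (by omega) c b) (q ^ (m - j))
            rwa [← pow_mul] at this
          have h3 := Ideal.mul_mem_mul h1 h2
          rw [← pow_add] at h3
          exact Ideal.pow_le_pow_right (nu_exp_bound q m j hq3 hjm) h3
        rw [hk] at hmem
        have he : 1 ≤ q ^ (m+1) - 1 := by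
          have : 3 ≤ q ^ (m+1) := le_trans hq3 (Nat.le_self_pow (by omega) q)
          omega
        have hfact : π - π ^ q ^ (m+1) = π * (1 - π ^ (q ^ (m+1) - 1)) :=
          hfactgen _ (hqk1 _)
        set x := B (m+1) a b with hx
        have hmem2 : π * (1 - π ^ (q ^ (m+1) - 1)) * x
            ∈ (Ideal.span {π} : Ideal R) ^ (m+2) := by
          have : ((π - π ^ q ^ (m+1)) • B (m+1)) a b
              = π * (1 - π ^ (q ^ (m+1) - 1)) * x := by
            simp only [Matrix.smul_apply, smul_eq_mul, hfact, hx]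
          rwa [this] at hmem
        have hmem3 : π * x ∈ (Ideal.span {π} : Ideal R) ^ (m+2) := by
          have heq : π * x = Ring.inverse (1 - π ^ (q ^ (m+1) - 1)) *
              (π * (1 - π ^ (q ^ (m+1) - 1)) * x) := by
            rw [show π * (1 - π ^ (q ^ (m+1) - 1)) * x
              = (1 - π ^ (q ^ (m+1) - 1)) * (π * x) by ring, ← mul_assoc,
              Ring.inverse_mul_cancel _ (hunit _ he), one_mul]
          rw [heq]
          exact Ideal.mul_mem_left _ _ hmem2
        rw [Ideal.span_singleton_pow, Ideal.mem_span_singleton] at hmem3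
        rw [Ideal.span_singleton_pow, Ideal.mem_span_singleton]
        have : π ^ (m+2) = π * π ^ (m+1) := by rw [pow_succ]; ring
        rw [this] at hmem3
        exact (mul_dvd_mul_iff_left hπ0).mp hmem3
  refine ⟨⟨Bc, ⟨hBc0, hBcrec⟩, ?_⟩, fun B hB => ⟨hval B hB, hB.1 ▸ isUnit_one⟩⟩
  -- uniqueness
  rintro B' ⟨hB'0, hrec'⟩
  funext k
  induction k using Nat.strong_induction_on with
  | _ k ih =>
    cases k with
    | zero => rw [hB'0, hBc0]
    | succ m =>
      have h1 := key B' hrec' (m+1)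
      have h2 := key Bc hBcrec (m+1)
      have hsum : (∑ j ∈ range (m+1),
            B' (m+1 - (j+1)) * (C (j+1)).map (fun x => x ^ q ^ (m+1 - (j+1))))
          = ∑ j ∈ range (m+1),
            Bc (m+1 - (j+1)) * (C (j+1)).map (fun x => x ^ q ^ (m+1 - (j+1))) := by
        apply Finset.sum_congr rfl
        intro j hj
        rw [ih (m+1-(j+1)) (by omega)]
      rw [hsum, h2] at h1
      have he : 1 ≤ q ^ (m+1) - 1 := by
        have : 3 ≤ q ^ (m+1) := le_trans hq3 (Nat.le_self_pow (by omega) q)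
        omega
      have hne : π - π ^ q ^ (m+1) ≠ 0 := by
        rw [hfactgen _ (hqk1 _)]
        exact mul_ne_zero hπ0 (hunit _ he).ne_zero
      ext a b
      have := congrFun (congrFun h1 a) b
      simp only [Matrix.smul_apply, smul_eq_mul] at this
      exact mul_left_cancel₀ hne this.symm
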